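/- Let a, n ∈ ℤ with a ≥ 1 and n ≥ 2, and let p be an integer with p > a + 1. Then every real root x of the polynomial f_{n,a,p}(x) = x^n − a·x^{n−1} − p satisfies |x| > 1. Consequently, every complex root of f_{n,a,p} of modulus less than 1 is nonreal. -/

import Mathlib

open Polynomial

/-- The polynomial `f_{n,a,p}(x) = x^n - a*x^(n-1) - p` in `ℤ[x]`. -/
noncomputable def fnap (n : ℕ) (a p : ℤ) : Polynomial ℤ :=
  X ^ n - C a * X ^ (n - 1) - C p

theorem stmt_12 (a : ℤ) (n : ℕ) (p : ℤ) (ha : 1 ≤ a) (hn : 2 ≤ n)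
    (hpa : a + 1 < p) :
    (∀ x : ℝ, Polynomial.aeval x (fnap n a p) = 0 → 1 < |x|) ∧
      ∀ α : ℂ, Polynomial.aeval α (fnap n a p) = 0 → ‖α‖ < 1 →
        α.im ≠ 0 := by
  have hreal : ∀ x : ℝ, Polynomial.aeval x (fnap n a p) = 0 → 1 < |x| := by
    intro x hx
    by_contra h
    push_neg at h
    simp only [fnap, map_sub, map_mul, map_pow, aeval_X, aeval_C, eq_intCast, map_intCast] at hx
    have ha' : (0 : ℝ) ≤ a := by exact_mod_cast (by linarith : (0:ℤ) ≤ a)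
    have hp : x ^ n - (a : ℝ) * x ^ (n - 1) = p := by linarith
    have h1 : |x ^ n - (a : ℝ) * x ^ (n - 1)| ≤ |x| ^ n + (a : ℝ) * |x| ^ (n - 1) := by
      calc |x ^ n - (a : ℝ) * x ^ (n - 1)| ≤ |x ^ n| + |(a : ℝ) * x ^ (n - 1)| :=
            abs_sub (x ^ n) _
        _ = |x| ^ n + (a : ℝ) * |x| ^ (n - 1) := by
            rw [abs_pow, abs_mul, abs_pow, abs_of_nonneg ha']
    have hxn : |x| ^ n ≤ 1 := pow_le_one₀ (abs_nonneg x) h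
    have hxn1 : |x| ^ (n - 1) ≤ 1 := pow_le_one₀ (abs_nonneg x) h
    have h2 : |x ^ n - (a : ℝ) * x ^ (n - 1)| ≤ 1 + a := by
      have := mul_le_mul_of_nonneg_left hxn1 ha'
      linarith
    have hp' : (a : ℝ) + 1 < p := by exact_mod_cast hpa
    have : (p : ℝ) ≤ 1 + a := by
      calc (p : ℝ) = |x ^ n - (a : ℝ) * x ^ (n - 1)| := by
            rw [hp]; exact (abs_of_pos (by linarith)).symm
        _ ≤ 1 + a := h2
    linarith
  refine ⟨hreal, ?_⟩
  intro α hα habs him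
  have hαre : α = ((α.re : ℝ) : ℂ) := by
    exact (Complex.ext (by simp) (by simp [him])).symm
  simp only [fnap, map_sub, map_mul, map_pow, aeval_X, aeval_C, eq_intCast, map_intCast] at hα
  rw [hαre] at hα
  have hz : ((α.re ^ n - (a : ℝ) * α.re ^ (n - 1) - p : ℝ) : ℂ) = 0 := by
    push_cast
    push_cast at hα
    exact hα
  have hz' : (α.re : ℝ) ^ n - (a : ℝ) * α.re ^ (n - 1) - p = 0 := by
    exact_mod_cast hz
  have := hreal α.re (by
    simp only [fnap, map_sub, map_mul, map_pow, aeval_X, aeval_C, eq_intCast, map_intCast]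
    exact hz')
  have habs' : ‖α‖ = |α.re| := by
    rw [hαre]; simp
  rw [habs'] at habs
  linarith
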